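/- Let α, β, v ∈ ℝ with β ≠ 0. On the open set U = {(S,I,R) ∈ ℝ³ : S > 0 and I > 0}, define the skew-symmetric matrix-valued map π₂ with entries π₂_{SI} = −β·S·I, π₂_{SR} = β·S·I, π₂_{IR} = −β·S·I, and the Hamiltonian H₂(S,I,R) = −(R + (α/β)·log S − (v/β)·log I). Then (i) π₂ satisfies the Jacobi identity on U; (ii) for all (S,I,R) ∈ U, π₂·∇H₂ = (−β·S·I − v·S, β·S·I − α·I, α·I + v·S), the vector field of the SIR model with vaccination rate v·S; and (iii) the sum of π₂ with the first structure π₁ (entries π₁_{SI} = 0, π₁_{SR} = −β·S·I − v·S, π₁_{IR} = β·S·I − α·I) also satisfies the Jacobi identity, so the two structures are compatible. -/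

import Mathlib

/-- A pointwise skew-symmetric matrix-valued map satisfies the Jacobi identity on a set `U`
if for all `x ∈ U` and indices `i j k`,
`∑ l, (P_{l i}(x)·∂_l P_{j k}(x) + P_{l j}(x)·∂_l P_{k i}(x) + P_{l k}(x)·∂_l P_{i j}(x)) = 0`. -/
def JacobiIdentityOn {n : Type*} [Fintype n] [DecidableEq n]
    (P : (n → ℝ) → Matrix n n ℝ) (U : Set (n → ℝ)) : Prop :=
  ∀ x ∈ U, ∀ i j k : n,
    ∑ l : n,
      (P x l i * fderiv ℝ (fun y => P y j k) x (Pi.single l 1) +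
        P x l j * fderiv ℝ (fun y => P y k i) x (Pi.single l 1) +
        P x l k * fderiv ℝ (fun y => P y i j) x (Pi.single l 1)) = 0

/-- The Hamiltonian vector field `π(x)·∇H(x)` of a matrix-valued map `P` and Hamiltonian `H`. -/
noncomputable def hamVF {n : Type*} [Fintype n] [DecidableEq n]
    (P : (n → ℝ) → Matrix n n ℝ) (H : (n → ℝ) → ℝ) (x : n → ℝ) : n → ℝ :=
  (P x).mulVec fun j => fderiv ℝ H x (Pi.single j 1)

/-- The second Poisson structure of the SIR model with vaccination rate `v·S`, on coordinates
`(S,I,R) = (x 0, x 1, x 2)`: `π₂_{SI} = −β·S·I`, `π₂_{SR} = β·S·I`, `π₂_{IR} = −β·S·I`. -/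
noncomputable def sirVaccSPoisson2 (β : ℝ) (x : Fin 3 → ℝ) : Matrix (Fin 3) (Fin 3) ℝ :=
  Matrix.of
    ![![0, -β * x 0 * x 1, β * x 0 * x 1],
      ![-(-β * x 0 * x 1), 0, -β * x 0 * x 1],
      ![-(β * x 0 * x 1), -(-β * x 0 * x 1), 0]]

/-- The first Poisson structure of the SIR model with vaccination rate `v·S`:
`π₁_{SI} = 0`, `π₁_{SR} = −β·S·I − v·S`, `π₁_{IR} = β·S·I − α·I`. -/
noncomputable def sirVaccSPoisson1 (α β v : ℝ) (x : Fin 3 → ℝ) : Matrix (Fin 3) (Fin 3) ℝ :=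
  Matrix.of
    ![![0, 0, -β * x 0 * x 1 - v * x 0],
      ![0, 0, β * x 0 * x 1 - α * x 1],
      ![-(-β * x 0 * x 1 - v * x 0), -(β * x 0 * x 1 - α * x 1), 0]]

private lemma proj_hfd (i : Fin 3) (x : Fin 3 → ℝ) :
    HasFDerivAt (fun y : Fin 3 → ℝ => y i)
      (ContinuousLinearMap.proj i : (Fin 3 → ℝ) →L[ℝ] ℝ) x := by
  exact (ContinuousLinearMap.proj (R := ℝ) (φ := fun _ : Fin 3 => ℝ) i).hasFDerivAt (x := x)

private lemma fd_poly (c d e : ℝ) (x : Fin 3 → ℝ) (l : Fin 3) :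
    fderiv ℝ (fun y : Fin 3 → ℝ => c * (y 0 * y 1) + (d * y 0 + e * y 1)) x (Pi.single l 1)
      = c * (x 0 * (Pi.single l (1:ℝ) : Fin 3 → ℝ) 1 + x 1 * (Pi.single l (1:ℝ) : Fin 3 → ℝ) 0)
        + (d * (Pi.single l (1:ℝ) : Fin 3 → ℝ) 0 + e * (Pi.single l (1:ℝ) : Fin 3 → ℝ) 1) := by
  have h0 := proj_hfd 0 x
  have h1 := proj_hfd 1 x
  have h := (((h0.mul h1).const_mul c).add ((h0.const_mul d).add (h1.const_mul e)))
  rw [HasFDerivAt.fderiv (f := fun y : Fin 3 → ℝ => c * (y 0 * y 1) + (d * y 0 + e * y 1)) h]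
  simp [ContinuousLinearMap.proj_apply, mul_comm]
  ring

private lemma fd_H (α β v : ℝ) (x : Fin 3 → ℝ) (h0 : x 0 > 0) (h1 : x 1 > 0) (j : Fin 3) :
    fderiv ℝ (fun y : Fin 3 → ℝ => -(y 2 + α / β * Real.log (y 0) - v / β * Real.log (y 1))) x
        (Pi.single j 1)
      = -((Pi.single j (1:ℝ) : Fin 3 → ℝ) 2
          + α / β * ((x 0)⁻¹ * (Pi.single j (1:ℝ) : Fin 3 → ℝ) 0)
          - v / β * ((x 1)⁻¹ * (Pi.single j (1:ℝ) : Fin 3 → ℝ) 1)) := by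
  have hL0 : HasFDerivAt (fun y : Fin 3 → ℝ => Real.log (y 0))
      ((x 0)⁻¹ • (ContinuousLinearMap.proj 0 : (Fin 3 → ℝ) →L[ℝ] ℝ)) x :=
    by have := (Real.hasDerivAt_log h0.ne').comp_hasFDerivAt x (proj_hfd 0 x); exact this
  have hL1 : HasFDerivAt (fun y : Fin 3 → ℝ => Real.log (y 1))
      ((x 1)⁻¹ • (ContinuousLinearMap.proj 1 : (Fin 3 → ℝ) →L[ℝ] ℝ)) x :=
    by have := (Real.hasDerivAt_log h1.ne').comp_hasFDerivAt x (proj_hfd 1 x); exact this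
  have h := (((proj_hfd 2 x).add (hL0.const_mul (α / β))).sub (hL1.const_mul (v / β))).neg
  rw [HasFDerivAt.fderiv (f := fun y : Fin 3 → ℝ => -(y 2 + α / β * Real.log (y 0) - v / β * Real.log (y 1))) h]
  simp [ContinuousLinearMap.proj_apply, mul_comm]

private lemma entry2 (β : ℝ) (j k : Fin 3) :
    (fun y : Fin 3 → ℝ => sirVaccSPoisson2 β y j k)
      = fun y => (![![0, -β, β], ![β, 0, -β], ![-β, β, 0]] j k) * (y 0 * y 1)
          + ((0:ℝ) * y 0 + 0 * y 1) := by
  funext y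
  fin_cases j <;> fin_cases k <;> simp [sirVaccSPoisson2] <;> ring

private lemma entrySum (α β v : ℝ) (j k : Fin 3) :
    (fun y : Fin 3 → ℝ => (sirVaccSPoisson1 α β v y + sirVaccSPoisson2 β y) j k)
      = fun y => (![![0, -β, 0], ![β, 0, 0], ![0, 0, 0]] j k) * (y 0 * y 1)
          + ((![![0, 0, -v], ![0, 0, 0], ![v, 0, 0]] j k) * y 0
            + (![![0, 0, 0], ![0, 0, -α], ![0, α, 0]] j k) * y 1) := by
  funext y
  fin_cases j <;> fin_cases k <;>
    simp [sirVaccSPoisson1, sirVaccSPoisson2, Matrix.add_apply, Matrix.vecHead, Matrix.vecTail] <;> ring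

set_option maxHeartbeats 1000000 in
/-- On `U = {(S,I,R) : S > 0 ∧ I > 0}`: (i) `π₂` satisfies the Jacobi identity; (ii) with the
Hamiltonian `H₂ = −(R + (α/β)·log S − (v/β)·log I)` the Hamiltonian vector field of `π₂` is
the vector field `(−β·S·I − v·S, β·S·I − α·I, α·I + v·S)` of the SIR model with vaccination
rate `v·S`; (iii) `π₁ + π₂` also satisfies the Jacobi identity, so the two structures are
compatible. -/
theorem sirVaccinationS_biHamiltonian (α β v : ℝ) (hβ : β ≠ 0) :
    JacobiIdentityOn (sirVaccSPoisson2 β) {x : Fin 3 → ℝ | x 0 > 0 ∧ x 1 > 0} ∧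
    (∀ x : Fin 3 → ℝ, x 0 > 0 → x 1 > 0 →
      hamVF (sirVaccSPoisson2 β)
          (fun y => -(y 2 + α / β * Real.log (y 0) - v / β * Real.log (y 1))) x =
        ![-β * x 0 * x 1 - v * x 0, β * x 0 * x 1 - α * x 1, α * x 1 + v * x 0]) ∧
    JacobiIdentityOn (fun x => sirVaccSPoisson1 α β v x + sirVaccSPoisson2 β x)
      {x : Fin 3 → ℝ | x 0 > 0 ∧ x 1 > 0} := by
  refine ⟨?_, ?_, ?_⟩
  · intro x _ i j k
    rw [Fin.sum_univ_three, entry2 β j k, entry2 β k i, entry2 β i j]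
    simp only [fd_poly]
    fin_cases i <;> fin_cases j <;> fin_cases k <;>
      simp [sirVaccSPoisson2, Pi.single_apply]
  · intro x h0 h1
    funext i
    have hd : ∀ j : Fin 3,
        fderiv ℝ (fun y : Fin 3 → ℝ =>
          -(y 2 + α / β * Real.log (y 0) - v / β * Real.log (y 1))) x (Pi.single j 1)
        = -((Pi.single j (1:ℝ) : Fin 3 → ℝ) 2
            + α / β * ((x 0)⁻¹ * (Pi.single j (1:ℝ) : Fin 3 → ℝ) 0)
            - v / β * ((x 1)⁻¹ * (Pi.single j (1:ℝ) : Fin 3 → ℝ) 1)) :=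
      fd_H α β v x h0 h1
    simp only [hamVF, Matrix.mulVec, dotProduct, Fin.sum_univ_three, hd]
    fin_cases i <;>
      simp [sirVaccSPoisson2, Pi.single_apply] <;>
      field_simp <;> ring
  · intro x _ i j k
    rw [Fin.sum_univ_three, entrySum α β v j k, entrySum α β v k i, entrySum α β v i j]
    simp only [fd_poly]
    fin_cases i <;> fin_cases j <;> fin_cases k <;>
      simp [sirVaccSPoisson1, sirVaccSPoisson2, Matrix.add_apply, Matrix.vecHead, Matrix.vecTail, Pi.single_apply] <;> ring
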